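/- Let q = e^{2πi/3} and let N ≥ 2. Suppose P ∈ ℂ[z_1,…,z_N] satisfies, for every i ∈ {1,…,N−1}, the adjacent exchange relation (q·z_i + z_{i+1})·P(…,z_i,z_{i+1},…) = (z_i + q·z_{i+1})·P(…,z_{i+1},z_i,…), where the right-hand side is P with the variables z_i and z_{i+1} interchanged. Then there exists a symmetric polynomial S ∈ ℂ[z_1,…,z_N] such that P(z_1,…,z_N) = ∏_{1 ≤ l < m ≤ N} (z_l + q·z_m) · S(z_1,…,z_N). -/

import Mathlib

open MvPolynomial

noncomputable def q : ℂ := Complex.exp (2 * Real.pi * Complex.I / 3)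

lemma q_pow_three : q ^ 3 = 1 := by
  rw [q, ← Complex.exp_nat_mul]
  rw [show ((3:ℕ):ℂ) * (2 * Real.pi * Complex.I / 3) = 2 * Real.pi * Complex.I by push_cast; ring]
  exact Complex.exp_two_pi_mul_I

lemma q_ne_one : q ≠ 1 := by
  rw [q, ne_eq, Complex.exp_eq_one_iff]
  rintro ⟨n, hn⟩
  have hπ : (Real.pi : ℂ) ≠ 0 := by simpa using Real.pi_ne_zero
  have h2 : (2 : ℂ) * Real.pi * Complex.I ≠ 0 := by
    simp [hπ, Complex.I_ne_zero, two_ne_zero]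
  have h' : ((n:ℂ) * 3 - 1) * (2 * Real.pi * Complex.I) = 0 := by
    have hn3 := congrArg (fun z => 3 * z) hn
    rw [mul_div_cancel₀ _ (by norm_num : (3:ℂ) ≠ 0)] at hn3
    linear_combination -hn3
  have h3 : (n : ℂ) * 3 = 1 := by
    have := (mul_eq_zero.1 h').resolve_right h2
    linear_combination this
  have h4 : (n * 3 : ℤ) = 1 := by exact_mod_cast h3
  omega

lemma q_sq_ne_one : q ^ 2 ≠ 1 := fun h => q_ne_one (by
  have h3 := q_pow_three
  rw [pow_succ, h, one_mul] at h3
  exact h3)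

lemma q_ne_zero : q ≠ 0 := Complex.exp_ne_zero _

lemma one_add_q_ne_zero : 1 + q ≠ 0 := fun h => q_sq_ne_one (by
  have : q = -1 := by linear_combination h
  rw [this]; ring)


lemma finSuccEquiv_C' {n : ℕ} (r : ℂ) :
    (MvPolynomial.finSuccEquiv ℂ n) (C r) = Polynomial.C (C r) := by
  have := congrArg (fun f => (f : ℂ →+* _) r) (MvPolynomial.finSuccEquiv_comp_C_eq_C (R := ℂ) n)
  exact ((MvPolynomial.finSuccEquiv ℂ n).toEquiv.symm_apply_eq.mp (by exact this)).symm

lemma prime_X_add_C_mul_X {n : ℕ} {c : Fin (n+1)} (hc : c ≠ 0) :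
    Prime (X 0 + C q * X c : MvPolynomial (Fin (n+1)) ℂ) := by
  obtain ⟨d, rfl⟩ : ∃ d : Fin n, c = d.succ := ⟨c.pred hc, (Fin.succ_pred c hc).symm⟩
  rw [← MulEquiv.prime_iff (MvPolynomial.finSuccEquiv ℂ n).toMulEquiv]
  have : (MvPolynomial.finSuccEquiv ℂ n).toMulEquiv (X 0 + C q * X d.succ)
      = Polynomial.X - Polynomial.C (-(C q * X d)) := by
    show (MvPolynomial.finSuccEquiv ℂ n) (X 0 + C q * X d.succ) = _
    rw [map_add, map_mul, finSuccEquiv_X_zero, finSuccEquiv_X_succ, finSuccEquiv_C']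
    rw [map_neg, sub_neg_eq_add, map_mul]
  rw [this]
  exact Polynomial.prime_X_sub_C _

lemma prime_linear {N : ℕ} {a b : Fin N} (hab : a ≠ b) :
    Prime (X a + C q * X b : MvPolynomial (Fin N) ℂ) := by
  obtain ⟨n, rfl⟩ : ∃ n, N = n + 1 := ⟨N - 1, by omega⟩
  rw [← MulEquiv.prime_iff (MvPolynomial.renameEquiv ℂ (Equiv.swap a 0)).toMulEquiv]
  have h1 : (MvPolynomial.renameEquiv ℂ (Equiv.swap a 0)).toMulEquiv (X a + C q * X b)
      = X 0 + C q * X (Equiv.swap a 0 b) := by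
    show (MvPolynomial.renameEquiv ℂ (Equiv.swap a 0)) (X a + C q * X b) = _
    simp [renameEquiv_apply, rename_X]
  rw [h1]
  apply prime_X_add_C_mul_X
  intro hb0
  have := (Equiv.swap a 0).injective (hb0.trans (Equiv.swap_apply_left a 0).symm)
  exact hab this.symm


lemma linear_not_dvd {N : ℕ} {a b c d : Fin N} (hab : a ≠ b) (hcd : c ≠ d)
    (hne : (a, b) ≠ (c, d)) :
    ¬ ((X a + C q * X b : MvPolynomial (Fin N) ℂ) ∣ X c + C q * X d) := by
  rintro ⟨g, hg⟩
  set v : Fin N → ℂ := fun j => if j = a then -q else if j = b then 1 else if j = c then 1 else 0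
    with hv
  have h0 := congrArg (eval v) hg
  have hva : v a = -q := by simp [hv]
  have hvb : v b = 1 := by simp [hv, hab.symm]
  rw [map_mul] at h0
  simp only [map_add, map_mul, eval_X, eval_C] at h0
  rw [hva, hvb] at h0
  have hz : v c + q * v d = 0 := by rw [h0]; ring
  have hvc : v c = if c = a then -q else 1 := by
    rcases eq_or_ne c a with rfl | hca
    · simp [hv]
    · rcases eq_or_ne c b with rfl | hcb
      · simp [hv, hca]
      · simp [hv, hca, hcb]
  have hvd : v d = if d = a then -q else if d = b then 1 else 0 := by
    rcases eq_or_ne d a with rfl | hda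
    · simp [hv]
    · rcases eq_or_ne d b with rfl | hdb
      · simp [hv, hda]
      · simp [hv, hda, hdb, hcd.symm]
  rcases eq_or_ne c a with rfl | hca
  · -- c = a, so d ≠ b and d ≠ a
    have hdb : d ≠ b := fun h => hne (by rw [h])
    have hda : d ≠ c := hcd.symm
    rw [hvc, hvd, if_pos rfl, if_neg hda, if_neg hdb] at hz
    exact q_ne_zero (by linear_combination -hz)
  · rw [hvc, if_neg hca, hvd] at hz
    rcases eq_or_ne d a with rfl | hda
    · rw [if_pos rfl] at hz
      exact q_sq_ne_one (by linear_combination -hz)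
    · rw [if_neg hda] at hz
      rcases eq_or_ne d b with rfl | hdb
      · rw [if_pos rfl] at hz
        exact one_add_q_ne_zero (by linear_combination hz)
      · rw [if_neg hdb] at hz
        norm_num at hz

lemma prod_L_dvd {N : ℕ} (s : Finset (Fin N × Fin N)) (hs : ∀ p ∈ s, p.1 ≠ p.2)
    (T : MvPolynomial (Fin N) ℂ) (hd : ∀ p ∈ s, (X p.1 + C q * X p.2) ∣ T) :
    (∏ p ∈ s, (X p.1 + C q * X p.2)) ∣ T := by
  induction s using Finset.induction generalizing T with
  | empty => simpa using one_dvd T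
  | @insert p s hp ih =>
    obtain ⟨T', rfl⟩ := hd p (Finset.mem_insert_self p s)
    have hrest : ∀ r ∈ s, (X r.1 + C q * X r.2 : MvPolynomial (Fin N) ℂ) ∣ T' := by
      intro r hr
      have hdvd := hd r (Finset.mem_insert_of_mem hr)
      rcases (prime_linear (hs r (Finset.mem_insert_of_mem hr))).dvd_or_dvd hdvd with h1 | h2
      · exact absurd h1 (linear_not_dvd (hs r (Finset.mem_insert_of_mem hr))
          (hs p (Finset.mem_insert_self p s)) (by
            intro hrp
            exact hp (by rwa [show r = p from Prod.ext (congrArg Prod.fst hrp)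
              (congrArg Prod.snd hrp)] at hr)))
      · exact h2
    rw [Finset.prod_insert hp]
    exact mul_dvd_mul_left _ (ih (fun r hr => hs r (Finset.mem_insert_of_mem hr)) T' hrest)


lemma swap_adj_lt {N : ℕ} {a b x y : Fin N} (hab : a.val + 1 = b.val) (hxy : x < y)
    (hne : (x, y) ≠ (a, b)) :
    Equiv.swap a b x < Equiv.swap a b y := by
  have hxyv : x.val < y.val := hxy
  rcases eq_or_ne x a with rfl | hxa
  · have hyb : y ≠ b := fun h => hne (by rw [h])
    have hya : y ≠ x := ne_of_gt hxy
    rw [Equiv.swap_apply_left, Equiv.swap_apply_of_ne_of_ne hya hyb]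
    have h1 : y.val ≠ b.val := fun h => hyb (Fin.ext h)
    exact Fin.lt_def.mpr (by omega)
  · rcases eq_or_ne x b with rfl | hxb
    · have hya : y ≠ a := fun h => by
        have : y.val = a.val := by rw [h]
        omega
      have hyb : y ≠ x := ne_of_gt hxy
      rw [Equiv.swap_apply_right, Equiv.swap_apply_of_ne_of_ne hya hyb]
      exact Fin.lt_def.mpr (by omega)
    · rw [Equiv.swap_apply_of_ne_of_ne hxa hxb]
      have hx1 : x.val ≠ a.val := fun h => hxa (Fin.ext h)
      have hx2 : x.val ≠ b.val := fun h => hxb (Fin.ext h)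
      rcases eq_or_ne y a with rfl | hya
      · rw [Equiv.swap_apply_left]
        exact Fin.lt_def.mpr (by omega)
      · rcases eq_or_ne y b with rfl | hyb
        · rw [Equiv.swap_apply_right]
          exact Fin.lt_def.mpr (by omega)
        · rw [Equiv.swap_apply_of_ne_of_ne hya hyb]; exact hxy

lemma rename_swap_prod {N : ℕ} {a b : Fin N} (hab : a.val + 1 = b.val) :
    rename (Equiv.swap a b)
        (∏ p ∈ Finset.univ.filter (fun p : Fin N × Fin N => p.1 < p.2),
          (C q * X p.1 + X p.2))
      * (C q * X a + X b)
    = (∏ p ∈ Finset.univ.filter (fun p : Fin N × Fin N => p.1 < p.2),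
          (C q * X p.1 + X p.2))
      * (X a + C q * X b) := by
  set s := Equiv.swap a b with hs
  set S₁ := Finset.univ.filter (fun p : Fin N × Fin N => p.1 < p.2) with hS₁
  have hE : (a, b) ∈ S₁ := by
    simp only [hS₁, Finset.mem_filter, Finset.mem_univ, true_and]
    exact Fin.lt_def.mpr (by omega)
  have hren : rename s (∏ p ∈ S₁, (C q * X p.1 + X p.2))
      = ∏ p ∈ S₁, (C q * X (s p.1) + X (s p.2)) := by
    rw [map_prod]
    exact Finset.prod_congr rfl fun p _ => by simp [rename_X]
  have herase : ∏ p ∈ S₁.erase (a, b), (C q * X (s p.1) + X (s p.2))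
      = ∏ p ∈ S₁.erase (a, b), (C q * X p.1 + X p.2) := by
    refine Finset.prod_nbij' (fun p => (s p.1, s p.2)) (fun p => (s p.1, s p.2))
      ?_ ?_ ?_ ?_ ?_
    · intro p hp
      obtain ⟨hpne, hpS⟩ := Finset.mem_erase.mp hp
      have hplt : p.1 < p.2 := by
        simpa only [hS₁, Finset.mem_filter, Finset.mem_univ, true_and] using hpS
      refine Finset.mem_erase.mpr ⟨?_, ?_⟩
      · intro hEq
        have h1 : s p.1 = a := congrArg Prod.fst hEq
        have h2 : s p.2 = b := congrArg Prod.snd hEq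
        have hp1 : p.1 = b := by
          have := congrArg s h1
          rwa [hs, Equiv.swap_apply_self, Equiv.swap_apply_left] at this
        have hp2 : p.2 = a := by
          have := congrArg s h2
          rwa [hs, Equiv.swap_apply_self, Equiv.swap_apply_right] at this
        rw [hp1, hp2] at hplt
        exact absurd (Fin.lt_def.mp hplt) (by omega)
      · simp only [hS₁, Finset.mem_filter, Finset.mem_univ, true_and]
        exact swap_adj_lt hab hplt (by
          intro hEq
          exact hpne (by rw [show p = (p.1, p.2) from rfl, hEq]))
    · intro p hp
      obtain ⟨hpne, hpS⟩ := Finset.mem_erase.mp hp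
      have hplt : p.1 < p.2 := by
        simpa only [hS₁, Finset.mem_filter, Finset.mem_univ, true_and] using hpS
      refine Finset.mem_erase.mpr ⟨?_, ?_⟩
      · intro hEq
        have h1 : s p.1 = a := congrArg Prod.fst hEq
        have h2 : s p.2 = b := congrArg Prod.snd hEq
        have hp1 : p.1 = b := by
          have := congrArg s h1
          rwa [hs, Equiv.swap_apply_self, Equiv.swap_apply_left] at this
        have hp2 : p.2 = a := by
          have := congrArg s h2
          rwa [hs, Equiv.swap_apply_self, Equiv.swap_apply_right] at this
        rw [hp1, hp2] at hplt
        exact absurd (Fin.lt_def.mp hplt) (by omega)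
      · simp only [hS₁, Finset.mem_filter, Finset.mem_univ, true_and]
        exact swap_adj_lt hab hplt (by
          intro hEq
          exact hpne (by rw [show p = (p.1, p.2) from rfl, hEq]))
    · intro p _
      simp [hs, Equiv.swap_apply_self]
    · intro p _
      simp [hs, Equiv.swap_apply_self]
    · intro p _
      rfl
  rw [hren, ← Finset.mul_prod_erase _ _ hE, ← Finset.mul_prod_erase S₁ _ hE, herase]
  rw [hs, Equiv.swap_apply_left, Equiv.swap_apply_right]
  ring

/-- If `P ∈ ℂ[z_1,…,z_N]` satisfies all the adjacent exchange relations
`(q·z_i + z_{i+1})·P(…,z_i,z_{i+1},…) = (z_i + q·z_{i+1})·P(…,z_{i+1},z_i,…)`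
with `q = e^{2πi/3}`, then `P = ∏_{l<m} (z_l + q·z_m) · S` with `S` symmetric. -/

theorem exchange_factorization (N : ℕ) (hN : 2 ≤ N) (P : MvPolynomial (Fin N) ℂ)
    (h : ∀ i : ℕ, ∀ hi : i + 1 < N,
      (C q * X (⟨i, by omega⟩ : Fin N) + X ⟨i + 1, hi⟩) * P
        = (X (⟨i, by omega⟩ : Fin N) + C q * X ⟨i + 1, hi⟩)
            * rename (Equiv.swap (⟨i, by omega⟩ : Fin N) ⟨i + 1, hi⟩) P) :
    ∃ S : MvPolynomial (Fin N) ℂ,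
      (∀ σ : Equiv.Perm (Fin N), rename σ S = S) ∧
      P = (∏ p ∈ Finset.univ.filter (fun p : Fin N × Fin N => p.1 < p.2),
            (X p.1 + C q * X p.2)) * S := by
  obtain ⟨n, rfl⟩ : ∃ n, N = n + 1 := ⟨N - 1, by omega⟩
  set S₁ := Finset.univ.filter (fun p : Fin (n+1) × Fin (n+1) => p.1 < p.2) with hS₁
  set Sne := Finset.univ.filter (fun p : Fin (n+1) × Fin (n+1) => p.1 ≠ p.2) with hSne
  set D : MvPolynomial (Fin (n+1)) ℂ := ∏ p ∈ S₁, (X p.1 + C q * X p.2) with hD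
  set D' : MvPolynomial (Fin (n+1)) ℂ := ∏ p ∈ S₁, (C q * X p.1 + X p.2) with hD'
  set T : MvPolynomial (Fin (n+1)) ℂ := D' * P with hT
  -- adjacent invariance of T
  have hadj : ∀ (i : ℕ) (hi : i + 1 < n + 1),
      rename (Equiv.swap (⟨i, by omega⟩ : Fin (n+1)) ⟨i + 1, hi⟩) T = T := by
    intro i hi
    set a : Fin (n+1) := ⟨i, by omega⟩ with haa
    set b : Fin (n+1) := ⟨i + 1, hi⟩ with hbb
    have hba : b ≠ a := by
      simp only [haa, hbb, ne_eq, Fin.mk.injEq]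
      omega
    have hMne : (C q * X a + X b : MvPolynomial (Fin (n+1)) ℂ) ≠ 0 := by
      have heq : (C q * X a + X b : MvPolynomial (Fin (n+1)) ℂ) = X b + C q * X a :=
        add_comm _ _
      rw [heq]
      exact (prime_linear hba).ne_zero
    apply mul_right_cancel₀ hMne
    have hrsp := rename_swap_prod (a := a) (b := b) rfl
    calc rename (Equiv.swap a b) T * (C q * X a + X b)
        = (rename (Equiv.swap a b) D' * (C q * X a + X b))
            * rename (Equiv.swap a b) P := by rw [hT, map_mul]; ring
      _ = (D' * (X a + C q * X b)) * rename (Equiv.swap a b) P := by rw [← hS₁] at hrsp; rw [← hD'] at hrsp; rw [hrsp]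
      _ = D' * ((X a + C q * X b) * rename (Equiv.swap a b) P) := by ring
      _ = D' * ((C q * X a + X b) * P) := by rw [← h i hi]
      _ = T * (C q * X a + X b) := by rw [hT]; ring
  -- full invariance of T
  have hTsym : ∀ σ : Equiv.Perm (Fin (n+1)), rename σ T = T := by
    intro σ
    have hσ : σ ∈ Submonoid.closure
        (Set.range fun i : Fin n => Equiv.swap i.castSucc i.succ) := by
      rw [Equiv.Perm.mclosure_swap_castSucc_succ]
      exact Submonoid.mem_top σ
    induction hσ using Submonoid.closure_induction with
    | mem x hx =>
      obtain ⟨i, rfl⟩ := hx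
      have hcs : Equiv.swap i.castSucc i.succ
          = Equiv.swap (⟨i.1, by omega⟩ : Fin (n+1)) ⟨i.1 + 1, by omega⟩ := by
        congr 1
      have hres := hadj i.1 (by omega)
      rw [← hcs] at hres
      exact hres
    | one =>
      rw [show ⇑(1 : Equiv.Perm (Fin (n+1))) = id from rfl, rename_id, AlgHom.id_apply]
    | mul x y hx hy ihx ihy =>
      rw [show ⇑(x * y) = ⇑x ∘ ⇑y from rfl, ← rename_rename, ihy, ihx]
  -- every linear factor divides T
  have hdvdT : ∀ p ∈ Sne, (X p.1 + C q * X p.2 : MvPolynomial (Fin (n+1)) ℂ) ∣ T := by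
    intro p hp
    have hp' : p.1 ≠ p.2 := by
      simpa only [hSne, Finset.mem_filter, Finset.mem_univ, true_and] using hp
    set z0 : Fin (n+1) := ⟨0, by omega⟩ with hz0
    set z1 : Fin (n+1) := ⟨1, by omega⟩ with hz1
    have h01 : (z0, z1) ∈ S₁ := by
      simp only [hS₁, Finset.mem_filter, Finset.mem_univ, true_and]
      rw [hz0, hz1]
      exact Fin.mk_lt_mk.mpr (by omega)
    have hbase : (X z1 + C q * X z0 : MvPolynomial (Fin (n+1)) ℂ) ∣ T := by
      have hd1 : (C q * X z0 + X z1 : MvPolynomial (Fin (n+1)) ℂ) ∣ D' := by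
        have := Finset.dvd_prod_of_mem
          (fun p : Fin (n+1) × Fin (n+1) => (C q * X p.1 + X p.2 : MvPolynomial (Fin (n+1)) ℂ)) h01
        simpa [hD'] using this
      have heq : (C q * X z0 + X z1 : MvPolynomial (Fin (n+1)) ℂ) = X z1 + C q * X z0 :=
        add_comm _ _
      rw [heq] at hd1
      exact dvd_mul_of_dvd_left hd1 P
    set a' := Equiv.swap z0 p.2 p.1 with ha'
    have hz01 : z1 ≠ z0 := by
      simp only [hz0, hz1, ne_eq, Fin.mk.injEq]
      omega
    have ha'0 : a' ≠ z0 := by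
      intro hcontr
      apply hp'
      have := congrArg (Equiv.swap z0 p.2) hcontr
      rwa [ha', Equiv.swap_apply_self, Equiv.swap_apply_left] at this
    set σ : Equiv.Perm (Fin (n+1)) := (Equiv.swap z0 p.2) * (Equiv.swap z1 a') with hσ
    have hσ1 : σ z1 = p.1 := by
      show Equiv.swap z0 p.2 (Equiv.swap z1 a' z1) = p.1
      rw [Equiv.swap_apply_left, ha', Equiv.swap_apply_self]
    have hσ0 : σ z0 = p.2 := by
      show Equiv.swap z0 p.2 (Equiv.swap z1 a' z0) = p.2
      rw [Equiv.swap_apply_of_ne_of_ne hz01.symm (Ne.symm ha'0), Equiv.swap_apply_left]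
    have hdvd2 : rename σ (X z1 + C q * X z0) ∣ rename σ T := map_dvd (rename σ) hbase
    rw [hTsym σ] at hdvd2
    have hre : rename σ (X z1 + C q * X z0 : MvPolynomial (Fin (n+1)) ℂ)
        = X p.1 + C q * X p.2 := by
      rw [map_add, map_mul, rename_X, rename_X, rename_C, hσ1, hσ0]
    rwa [hre] at hdvd2
  -- the big product divides T
  have hbig : (∏ p ∈ Sne, (X p.1 + C q * X p.2 : MvPolynomial (Fin (n+1)) ℂ)) ∣ T :=
    prod_L_dvd Sne
      (fun p hp => by
        simpa only [hSne, Finset.mem_filter, Finset.mem_univ, true_and] using hp)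
      T hdvdT
  -- splitting the big product
  set SGT := Finset.univ.filter (fun p : Fin (n+1) × Fin (n+1) => p.2 < p.1) with hSGT
  have hunion : Sne = S₁ ∪ SGT := by
    ext p
    simp only [hSne, hS₁, hSGT, Finset.mem_filter, Finset.mem_univ, true_and,
      Finset.mem_union]
    constructor
    · intro hne
      exact lt_or_gt_of_ne hne
    · rintro (h1 | h2)
      · exact ne_of_lt h1
      · exact ne_of_gt h2
  have hdisj : Disjoint S₁ SGT := by
    rw [Finset.disjoint_left]
    intro p h1 h2
    simp only [hS₁, Finset.mem_filter, Finset.mem_univ, true_and] at h1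
    simp only [hSGT, Finset.mem_filter, Finset.mem_univ, true_and] at h2
    exact absurd h1 (not_lt_of_gt h2)
  have hgt : (∏ p ∈ SGT, (X p.1 + C q * X p.2 : MvPolynomial (Fin (n+1)) ℂ)) = D' := by
    rw [hD']
    refine Finset.prod_nbij' Prod.swap Prod.swap ?_ ?_ ?_ ?_ ?_
    · intro p hp
      simp only [hSGT, Finset.mem_filter, Finset.mem_univ, true_and] at hp
      simp only [hS₁, Finset.mem_filter, Finset.mem_univ, true_and, Prod.fst_swap,
        Prod.snd_swap]
      exact hp
    · intro p hp
      simp only [hS₁, Finset.mem_filter, Finset.mem_univ, true_and] at hp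
      simp only [hSGT, Finset.mem_filter, Finset.mem_univ, true_and, Prod.fst_swap,
        Prod.snd_swap]
      exact hp
    · intro p _; exact Prod.swap_swap p
    · intro p _; exact Prod.swap_swap p
    · intro p _
      simp only [Prod.fst_swap, Prod.snd_swap]
      exact add_comm _ _
  have hsplit : (∏ p ∈ Sne, (X p.1 + C q * X p.2 : MvPolynomial (Fin (n+1)) ℂ)) = D * D' := by
    rw [hunion, Finset.prod_union hdisj, hgt, hD]
  obtain ⟨S, hS⟩ := hbig
  have hD'ne : D' ≠ 0 := by
    rw [hD']
    refine Finset.prod_ne_zero_iff.mpr fun p hp => ?_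
    have h12 : p.1 < p.2 := by
      simpa only [hS₁, Finset.mem_filter, Finset.mem_univ, true_and] using hp
    have heq : (C q * X p.1 + X p.2 : MvPolynomial (Fin (n+1)) ℂ) = X p.2 + C q * X p.1 :=
      add_comm _ _
    rw [heq]
    exact (prime_linear (ne_of_gt h12)).ne_zero
  have hP : P = D * S := by
    apply mul_left_cancel₀ hD'ne
    calc D' * P = T := hT.symm
      _ = (∏ p ∈ Sne, (X p.1 + C q * X p.2)) * S := hS
      _ = (D * D') * S := by rw [hsplit]
      _ = D' * (D * S) := by ring
  have hPRne : (∏ p ∈ Sne, (X p.1 + C q * X p.2 : MvPolynomial (Fin (n+1)) ℂ)) ≠ 0 := by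
    refine Finset.prod_ne_zero_iff.mpr fun p hp => ?_
    have hp' : p.1 ≠ p.2 := by
      simpa only [hSne, Finset.mem_filter, Finset.mem_univ, true_and] using hp
    exact (prime_linear hp').ne_zero
  have hSsym : ∀ σ : Equiv.Perm (Fin (n+1)), rename σ S = S := by
    intro σ
    apply mul_left_cancel₀ hPRne
    have h1 : rename σ (∏ p ∈ Sne, (X p.1 + C q * X p.2 : MvPolynomial (Fin (n+1)) ℂ))
        = ∏ p ∈ Sne, (X p.1 + C q * X p.2) := by
      rw [map_prod]
      refine Finset.prod_nbij' (fun p => (σ p.1, σ p.2)) (fun p => (σ⁻¹ p.1, σ⁻¹ p.2))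
        ?_ ?_ ?_ ?_ ?_
      · intro p hp
        have hp' : p.1 ≠ p.2 := by
          simpa only [hSne, Finset.mem_filter, Finset.mem_univ, true_and] using hp
        simp only [hSne, Finset.mem_filter, Finset.mem_univ, true_and]
        exact fun hc => hp' (σ.injective hc)
      · intro p hp
        have hp' : p.1 ≠ p.2 := by
          simpa only [hSne, Finset.mem_filter, Finset.mem_univ, true_and] using hp
        simp only [hSne, Finset.mem_filter, Finset.mem_univ, true_and]
        exact fun hc => hp' (σ⁻¹.injective hc)
      · intro p _
        simp
      · intro p _
        simp
      · intro p _
        rw [map_add, map_mul, rename_X, rename_X, rename_C]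
    calc (∏ p ∈ Sne, (X p.1 + C q * X p.2)) * rename σ S
        = rename σ ((∏ p ∈ Sne, (X p.1 + C q * X p.2)) * S) := by rw [map_mul, h1]
      _ = rename σ T := by rw [hS]
      _ = T := hTsym σ
      _ = (∏ p ∈ Sne, (X p.1 + C q * X p.2)) * S := hS
  exact ⟨S, hSsym, hP⟩
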